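/- Let p be a prime and for σ ∈ ℚ_p let u_σ ∈ SL(2,ℚ_p) be the matrix with rows (1,σ),(0,1). Then for every g ∈ SL(2,ℚ_p) with entries g_{ij} there exists j₀ such that for all integers j ≥ j₀, μ_p{σ ∈ ℚ_p : ‖u_σ g‖_p ≤ p^j} = p^j / max(|g₂₁|_p, |g₂₂|_p). In particular the ratio μ_p{σ : ‖u_σ g‖_p ≤ p^j} / μ_p{σ : ‖u_σ‖_p ≤ p^j} is eventually equal to 1/max(|g₂₁|_p, |g₂₂|_p). -/

import Mathlib

/-!
STATEMENT 10.
For g ∈ SL(2,ℚ_p), for all sufficiently large integers j,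
μ_p{σ : ‖u_σ g‖_p ≤ p^j} = p^j / max(|g₂₁|_p, |g₂₂|_p); in particular the ratio
μ_p{σ : ‖u_σ g‖_p ≤ p^j} / μ_p{σ : ‖u_σ‖_p ≤ p^j} is eventually 1/max(|g₂₁|_p, |g₂₂|_p).
-/

open MeasureTheory
open scoped ENNReal NNReal

/-- The max-norm of a square matrix over a normed field (e.g. ℚ_p). -/
noncomputable def matSupNorm {n : ℕ} {K : Type*} [NormedField K]
    (g : Matrix (Fin n) (Fin n) K) : ℝ :=
  ((Finset.univ.sup fun i => Finset.univ.sup fun j => ‖g i j‖₊ : NNReal) : ℝ)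

noncomputable instance (p : ℕ) [Fact p.Prime] : MeasurableSpace ℚ_[p] := borel _

/-- The upper-triangular unipotent matrix u_σ over ℚ_p. -/
noncomputable def uMatP (p : ℕ) [Fact p.Prime] (σ : ℚ_[p]) : Matrix (Fin 2) (Fin 2) ℚ_[p] :=
  !![1, σ; 0, 1]

instance (p : ℕ) [Fact p.Prime] : BorelSpace ℚ_[p] := ⟨rfl⟩

lemma myOfRealZpow {x : ℝ} (hx : 0 < x) (v : ℤ) :
    ENNReal.ofReal (x ^ v) = ENNReal.ofReal x ^ v := by
  cases v with
  | ofNat n => simp [ENNReal.ofReal_pow hx.le]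
  | negSucc n =>
    simp [zpow_negSucc, ENNReal.ofReal_inv_of_pos (pow_pos hx _),
      ENNReal.ofReal_pow hx.le]

section padic

variable (p : ℕ) [Fact p.Prime]

lemma ballMeas (r : ℝ) : MeasurableSet {x : ℚ_[p] | ‖x‖ ≤ r} :=
  (isClosed_le continuous_norm continuous_const).measurableSet

variable (μp : Measure ℚ_[p]) [μp.IsAddHaarMeasure]

lemma haarStep (v : ℤ) :
    μp {x : ℚ_[p] | ‖x‖ ≤ (p : ℝ) ^ v} = p * μp {x : ℚ_[p] | ‖x‖ ≤ (p : ℝ) ^ (v - 1)} := by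
  have hp : p.Prime := Fact.out
  have hp1 : (1 : ℝ) < p := by exact_mod_cast hp.one_lt
  have hp0 : (p : ℝ) ≠ 0 := by exact_mod_cast hp.pos.ne'
  set B : Set ℚ_[p] := {x | ‖x‖ ≤ (p : ℝ) ^ (v - 1)} with hB
  have hBm : MeasurableSet B := ballMeas p _
  set e : ℚ_[p] := (p : ℚ_[p]) ^ (-v) with he
  have hne : ‖e‖ = (p : ℝ) ^ v := by
    rw [he, Padic.norm_p_zpow, neg_neg]
  have hppq : (p : ℚ_[p]) ≠ 0 := by
    exact_mod_cast Nat.cast_ne_zero.2 hp.pos.ne'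
  have hbig : ∀ i j : ℕ, i < p → j < p → i ≠ j →
      ‖(i : ℚ_[p]) * e - (j : ℚ_[p]) * e‖ = (p : ℝ) ^ v := by
    intro i j hi hj hij
    have h1 : (i : ℚ_[p]) * e - (j : ℚ_[p]) * e = (((i : ℤ) - j : ℤ) : ℚ_[p]) * e := by
      push_cast; ring
    rw [h1, norm_mul, hne]
    have hnd : ¬ ((p : ℤ) ∣ ((i : ℤ) - j)) := by
      intro hdvd
      have hne0 : ((i : ℤ) - j) ≠ 0 := by
        intro h; apply hij; omega
      have habs : (p : ℤ) ∣ |(i : ℤ) - j| := (dvd_abs _ _).2 hdvd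
      have := Int.le_of_dvd (abs_pos.2 hne0) habs
      have : |(i : ℤ) - j| < p := by
        rw [abs_lt]; omega
      omega
    have hle : ‖(((i : ℤ) - j : ℤ) : ℚ_[p])‖ ≤ 1 := Padic.norm_int_le_one _
    have hnlt : ¬ ‖(((i : ℤ) - j : ℤ) : ℚ_[p])‖ < 1 := by
      rw [Padic.norm_intCast_lt_one_iff]; exact hnd
    have : ‖(((i : ℤ) - j : ℤ) : ℚ_[p])‖ = 1 := le_antisymm hle (not_lt.1 hnlt)
    rw [this, one_mul]
  have key : {x : ℚ_[p] | ‖x‖ ≤ (p : ℝ) ^ v}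
      = ⋃ i ∈ Finset.range p, ((-(((i : ℕ) : ℚ_[p]) * e)) + ·) ⁻¹' B := by
    ext x
    simp only [Set.mem_setOf_eq, Set.mem_iUnion, Set.mem_preimage, Finset.mem_range, hB]
    constructor
    · intro hx
      set y : ℚ_[p] := (p : ℚ_[p]) ^ v * x with hy
      have hyn : ‖y‖ ≤ 1 := by
        rw [hy, norm_mul, Padic.norm_p_zpow]
        calc (p : ℝ) ^ (-v) * ‖x‖ ≤ (p : ℝ) ^ (-v) * (p : ℝ) ^ v := by
              apply mul_le_mul_of_nonneg_left hx (by positivity)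
          _ = 1 := by rw [← zpow_add₀ hp0]; simp
      set z : ℤ_[p] := ⟨y, hyn⟩ with hz
      refine ⟨z.appr 1, by simpa using z.appr_lt 1, ?_⟩
      have hspec : ‖z - ((z.appr 1 : ℕ) : ℤ_[p])‖ ≤ (p : ℝ) ^ (-(1 : ℕ) : ℤ) :=
        (PadicInt.norm_le_pow_iff_mem_span_pow _ 1).2 (by simpa using z.appr_spec 1)
      have hq : ‖y - ((z.appr 1 : ℕ) : ℚ_[p])‖ ≤ (p : ℝ)⁻¹ := by
        have : ((z - ((z.appr 1 : ℕ) : ℤ_[p]) : ℤ_[p]) : ℚ_[p])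
            = y - ((z.appr 1 : ℕ) : ℚ_[p]) := by push_cast [hz]; rfl
        rw [← this, PadicInt.padic_norm_e_of_padicInt]
        simpa using hspec
      have hxy : e * y = x := by
        rw [he, hy, ← mul_assoc, ← zpow_add₀ hppq]; simp
      have hrw : -(((z.appr 1 : ℕ) : ℚ_[p]) * e) + x = e * (y - ((z.appr 1 : ℕ) : ℚ_[p])) := by
        rw [mul_sub, hxy]; ring
      show ‖-(((z.appr 1 : ℕ) : ℚ_[p]) * e) + x‖ ≤ (p : ℝ) ^ (v - 1)
      rw [hrw, norm_mul, hne]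
      calc (p : ℝ) ^ v * ‖y - ((z.appr 1 : ℕ) : ℚ_[p])‖ ≤ (p : ℝ) ^ v * (p : ℝ)⁻¹ := by
            apply mul_le_mul_of_nonneg_left hq (by positivity)
        _ = (p : ℝ) ^ (v - 1) := by
            rw [← zpow_neg_one, ← zpow_add₀ hp0]; ring_nf
    · rintro ⟨i, hi, hmem⟩
      have hmem' : ‖x - (i : ℚ_[p]) * e‖ ≤ (p : ℝ) ^ (v - 1) := by
        have : -((i : ℚ_[p]) * e) + x = x - (i : ℚ_[p]) * e := by ring
        rwa [this] at hmem
      have h1 : ‖(i : ℚ_[p]) * e‖ ≤ (p : ℝ) ^ v := by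
        rw [norm_mul, hne]
        have : ‖((i : ℕ) : ℚ_[p])‖ ≤ 1 := by
          have := Padic.norm_int_le_one (p := p) (i : ℤ)
          push_cast at this; exact this
        nlinarith [zpow_pos (by positivity : (0:ℝ) < (p:ℝ)) v]
      have hlt : (p : ℝ) ^ (v - 1) ≤ (p : ℝ) ^ v :=
        zpow_le_zpow_right₀ hp1.le (by omega)
      calc ‖x‖ = ‖(x - (i : ℚ_[p]) * e) + (i : ℚ_[p]) * e‖ := by ring_nf
        _ ≤ max ‖x - (i : ℚ_[p]) * e‖ ‖(i : ℚ_[p]) * e‖ := Padic.nonarchimedean _ _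
        _ ≤ (p : ℝ) ^ v := max_le (hmem'.trans hlt) h1
  have hdisj : (↑(Finset.range p) : Set ℕ).PairwiseDisjoint
      (fun i => ((-(((i : ℕ) : ℚ_[p]) * e)) + ·) ⁻¹' B) := by
    intro i hi j hj hij
    simp only [Finset.coe_range, Set.mem_Iio] at hi hj
    apply Set.disjoint_left.2
    intro x hxi hxj
    simp only [Set.mem_preimage, hB, Set.mem_setOf_eq] at hxi hxj
    have hsub : (i : ℚ_[p]) * e - (j : ℚ_[p]) * e
        = (-((j : ℚ_[p]) * e) + x) - (-((i : ℚ_[p]) * e) + x) := by ring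
    have : ‖(i : ℚ_[p]) * e - (j : ℚ_[p]) * e‖ ≤ (p : ℝ) ^ (v - 1) := by
      rw [hsub]
      calc ‖(-((j : ℚ_[p]) * e) + x) - (-((i : ℚ_[p]) * e) + x)‖
          = ‖(-((j : ℚ_[p]) * e) + x) + (-((-((i : ℚ_[p]) * e) + x)))‖ := by ring_nf
        _ ≤ max ‖-((j : ℚ_[p]) * e) + x‖ ‖-((-((i : ℚ_[p]) * e) + x))‖ :=
            Padic.nonarchimedean _ _
        _ ≤ (p : ℝ) ^ (v - 1) := by rw [norm_neg]; exact max_le hxj hxi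
    rw [hbig i j hi hj hij] at this
    have : (p : ℝ) ^ (v - 1) < (p : ℝ) ^ v := zpow_lt_zpow_right₀ hp1 (by omega)
    linarith [zpow_le_zpow_right₀ hp1.le (by omega : v - 1 ≤ v)]
  rw [key, measure_biUnion_finset hdisj (fun i _ => (ballMeas p _).preimage (measurable_const_add _))]
  have heach : ∀ i ∈ Finset.range p, μp (((-(((i : ℕ) : ℚ_[p]) * e)) + ·) ⁻¹' B) = μp B :=
    fun i _ => measure_preimage_add μp _ B
  rw [Finset.sum_congr rfl heach, Finset.sum_const, Finset.card_range, nsmul_eq_mul]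

variable (hμp : μp {x : ℚ_[p] | ‖x‖ ≤ 1} = 1)

include hμp in
lemma haarBall (v : ℤ) : μp {x : ℚ_[p] | ‖x‖ ≤ (p : ℝ) ^ v} = (p : ℝ≥0∞) ^ v := by
  have hp : p.Prime := Fact.out
  have hpe0 : (p : ℝ≥0∞) ≠ 0 := by exact_mod_cast Nat.cast_ne_zero.2 hp.pos.ne'
  have hpet : (p : ℝ≥0∞) ≠ ⊤ := ENNReal.natCast_ne_top p
  induction v using Int.induction_on with
  | zero => simpa using hμp
  | succ n ih =>
      have hs := haarStep p μp ((n : ℤ) + 1)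
      rw [show ((n : ℤ) + 1 - 1) = (n : ℤ) by ring, ih] at hs
      rw [hs, ENNReal.zpow_add hpe0 hpet n 1, zpow_one, mul_comm]
  | pred n ih =>
      have hs := haarStep p μp (-(n : ℤ))
      rw [ih] at hs
      have h2 : (p : ℝ≥0∞) * (p : ℝ≥0∞) ^ (-(n : ℤ) - 1) = (p : ℝ≥0∞) ^ (-(n : ℤ)) := by
        rw [ENNReal.zpow_sub hpe0 hpet (-(n : ℤ)) 1, zpow_one,
          mul_comm ((p : ℝ≥0∞) ^ (-(n : ℤ))) _, ← mul_assoc,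
          ENNReal.mul_inv_cancel hpe0 hpet, one_mul]
      exact (ENNReal.mul_right_inj hpe0 hpet).1 (hs.symm.trans h2.symm)

include hμp in
lemma ballShift (c d : ℚ_[p]) (hd : d ≠ 0) (j : ℤ) :
    μp {σ : ℚ_[p] | ‖c + σ * d‖ ≤ (p : ℝ) ^ j} = (p : ℝ≥0∞) ^ (j + d.valuation) := by
  have hp : p.Prime := Fact.out
  have hp0 : (p : ℝ) ≠ 0 := by exact_mod_cast hp.pos.ne'
  have hnorm : ‖d‖ = (p : ℝ) ^ (-d.valuation) := Padic.norm_eq_zpow_neg_valuation hd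
  have hset : {σ : ℚ_[p] | ‖c + σ * d‖ ≤ (p : ℝ) ^ j}
      = ((c / d) + ·) ⁻¹' {x : ℚ_[p] | ‖x‖ ≤ (p : ℝ) ^ (j + d.valuation)} := by
    ext σ
    simp only [Set.mem_setOf_eq, Set.mem_preimage]
    have heq : c + σ * d = d * (c / d + σ) := by field_simp
    have hdiv : (p : ℝ) ^ j / (p : ℝ) ^ (-d.valuation) = (p : ℝ) ^ (j + d.valuation) := by
      rw [div_eq_mul_inv, ← zpow_neg, neg_neg, ← zpow_add₀ hp0]
    rw [heq, norm_mul, hnorm, ← le_div_iff₀' (zpow_pos (by positivity) _), hdiv]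
  rw [hset, measure_preimage_add, haarBall p μp hμp]

omit [(μp).IsAddHaarMeasure] in
lemma matSupNormLeIff {g : Matrix (Fin 2) (Fin 2) ℚ_[p]} {r : ℝ} (hr : 0 ≤ r) :
    matSupNorm g ≤ r ↔ ∀ i j, ‖g i j‖ ≤ r := by
  unfold matSupNorm
  rw [← Real.coe_toNNReal r hr, NNReal.coe_le_coe]
  simp only [Finset.sup_le_iff, Finset.mem_univ, forall_true_left]
  constructor <;> intro h i j
  · exact_mod_cast h i j
  · exact_mod_cast h i j

omit [(μp).IsAddHaarMeasure] in
lemma keyIneq (a b c d σ : ℚ_[p]) (hdet : ‖a * d - c * b‖ = 1) (hbd : ‖b‖ ≤ ‖d‖)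
    (r : ℝ) (h1 : 1 ≤ r * ‖d‖) (h : ‖c + σ * d‖ ≤ r) : ‖a + σ * b‖ ≤ r := by
  have hd : d ≠ 0 := by
    rintro rfl
    have hb : b = 0 := by
      rw [norm_zero] at hbd
      exact norm_le_zero_iff.1 hbd
    rw [hb] at hdet
    simp at hdet
  have heq : a + σ * b = ((a * d - c * b) + b * (c + σ * d)) / d := by
    field_simp
    ring
  rw [heq, norm_div, div_le_iff₀ (norm_pos_iff.2 hd)]
  calc ‖(a * d - c * b) + b * (c + σ * d)‖
      ≤ max ‖a * d - c * b‖ ‖b * (c + σ * d)‖ := Padic.nonarchimedean _ _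
    _ ≤ r * ‖d‖ := by
        apply max_le
        · rw [hdet]; exact h1
        · rw [norm_mul]
          calc ‖b‖ * ‖c + σ * d‖ ≤ ‖d‖ * r :=
                mul_le_mul hbd h (norm_nonneg _) (norm_nonneg _)
            _ = r * ‖d‖ := mul_comm _ _

omit [(μp).IsAddHaarMeasure] in
lemma uMulEntries (σ : ℚ_[p]) (G : Matrix (Fin 2) (Fin 2) ℚ_[p]) :
    uMatP p σ * G = !![G 0 0 + σ * G 1 0, G 0 1 + σ * G 1 1; G 1 0, G 1 1] := by
  ext i j
  fin_cases i <;> fin_cases j <;>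
    simp [uMatP, Matrix.mul_apply, Fin.sum_univ_two]

include hμp in
lemma mainCase (a b c d : ℚ_[p]) (hdet : ‖a * d - c * b‖ = 1) (hbd : ‖b‖ ≤ ‖d‖) (j : ℤ)
    (hjd : ‖d‖ ≤ (p : ℝ) ^ j) (hj1 : 1 ≤ (p : ℝ) ^ j * ‖d‖) :
    μp {σ : ℚ_[p] | ‖a + σ * b‖ ≤ (p : ℝ) ^ j ∧ ‖c + σ * d‖ ≤ (p : ℝ) ^ j ∧
        ‖b‖ ≤ (p : ℝ) ^ j ∧ ‖d‖ ≤ (p : ℝ) ^ j}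
      = ENNReal.ofReal ((p : ℝ) ^ j / ‖d‖) := by
  have hp : p.Prime := Fact.out
  have hp0 : (p : ℝ) ≠ 0 := by exact_mod_cast hp.pos.ne'
  have hppos : (0 : ℝ) < p := by exact_mod_cast hp.pos
  have hd : d ≠ 0 := by
    rintro rfl
    rw [norm_zero, mul_zero] at hj1
    linarith
  have hb' : ‖b‖ ≤ (p : ℝ) ^ j := hbd.trans hjd
  have hset : {σ : ℚ_[p] | ‖a + σ * b‖ ≤ (p : ℝ) ^ j ∧ ‖c + σ * d‖ ≤ (p : ℝ) ^ j ∧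
        ‖b‖ ≤ (p : ℝ) ^ j ∧ ‖d‖ ≤ (p : ℝ) ^ j}
      = {σ : ℚ_[p] | ‖c + σ * d‖ ≤ (p : ℝ) ^ j} := by
    ext σ
    simp only [Set.mem_setOf_eq]
    exact ⟨fun h => h.2.1, fun h =>
      ⟨keyIneq p a b c d σ hdet hbd _ hj1 h, h, hb', hjd⟩⟩
  rw [hset, ballShift p μp hμp c d hd j]
  have hval : (p : ℝ) ^ j / ‖d‖ = (p : ℝ) ^ (j + d.valuation) := by
    rw [Padic.norm_eq_zpow_neg_valuation hd, div_eq_mul_inv, ← zpow_neg, neg_neg, ← zpow_add₀ hp0]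
  rw [hval, myOfRealZpow hppos, ENNReal.ofReal_natCast]

end padic

theorem stmt10 (p : ℕ) [Fact p.Prime] (μp : Measure ℚ_[p]) [μp.IsAddHaarMeasure]
    (hμp : μp {x : ℚ_[p] | ‖x‖ ≤ 1} = 1)
    (g : Matrix.SpecialLinearGroup (Fin 2) ℚ_[p]) :
    (∃ j₀ : ℤ, ∀ j : ℤ, j₀ ≤ j →
      μp {σ : ℚ_[p] |
          matSupNorm (uMatP p σ * (g : Matrix (Fin 2) (Fin 2) ℚ_[p])) ≤ (p : ℝ) ^ j} =
        ENNReal.ofReal ((p : ℝ) ^ j /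
          max ‖(g : Matrix (Fin 2) (Fin 2) ℚ_[p]) 1 0‖
            ‖(g : Matrix (Fin 2) (Fin 2) ℚ_[p]) 1 1‖)) ∧
    (∃ j₀ : ℤ, ∀ j : ℤ, j₀ ≤ j →
      (μp {σ : ℚ_[p] |
          matSupNorm (uMatP p σ * (g : Matrix (Fin 2) (Fin 2) ℚ_[p])) ≤ (p : ℝ) ^ j}).toReal /
        (μp {σ : ℚ_[p] | matSupNorm (uMatP p σ) ≤ (p : ℝ) ^ j}).toReal =
      1 / max ‖(g : Matrix (Fin 2) (Fin 2) ℚ_[p]) 1 0‖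
          ‖(g : Matrix (Fin 2) (Fin 2) ℚ_[p]) 1 1‖) := by
  have hp : p.Prime := Fact.out
  have hppos : (0 : ℝ) < p := by exact_mod_cast hp.pos
  have hp1 : (1 : ℝ) < p := by exact_mod_cast hp.one_lt
  set G := (g : Matrix (Fin 2) (Fin 2) ℚ_[p]) with hG
  set b := G 1 0 with hb
  set d := G 1 1 with hd
  set m := max ‖b‖ ‖d‖ with hm
  have hdet : G 0 0 * d - G 0 1 * b = 1 := by
    have := Matrix.SpecialLinearGroup.det_coe g
    rwa [Matrix.det_fin_two] at this
  have hdet1 : ‖G 0 0 * d - G 0 1 * b‖ = 1 := by rw [hdet, norm_one]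
  have hdet2 : ‖G 0 1 * b - G 0 0 * d‖ = 1 := by
    have h : G 0 1 * b - G 0 0 * d = -(G 0 0 * d - G 0 1 * b) := by ring
    rw [h, norm_neg, hdet1]
  have hm0 : 0 < m := by
    rw [hm]
    by_contra h
    push_neg at h
    have hbz : b = 0 := norm_le_zero_iff.1 (le_trans (le_max_left _ _) h)
    have hdz : d = 0 := norm_le_zero_iff.1 (le_trans (le_max_right _ _) h)
    rw [hbz, hdz] at hdet
    simp at hdet
  have hchar : ∀ (j : ℤ) (σ : ℚ_[p]), 0 < (p : ℝ) ^ j →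
      (matSupNorm (uMatP p σ * G) ≤ (p : ℝ) ^ j ↔
        (‖G 0 0 + σ * b‖ ≤ (p : ℝ) ^ j ∧ ‖G 0 1 + σ * d‖ ≤ (p : ℝ) ^ j ∧
         ‖b‖ ≤ (p : ℝ) ^ j ∧ ‖d‖ ≤ (p : ℝ) ^ j)) := by
    intro j σ hj
    rw [uMulEntries p σ G, matSupNormLeIff p hj.le]
    constructor
    · intro h
      exact ⟨by simpa using h 0 0, by simpa using h 0 1, by simpa using h 1 0,
        by simpa using h 1 1⟩
    · rintro ⟨h1, h2, h3, h4⟩ i k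
      fin_cases i <;> fin_cases k <;> simpa
  obtain ⟨N, hN⟩ := pow_unbounded_of_one_lt (max m m⁻¹) hp1
  have hmono : ∀ j : ℤ, (N : ℤ) ≤ j → m ≤ (p : ℝ) ^ j ∧ 1 ≤ (p : ℝ) ^ j * m := by
    intro j hj
    have h1 : (p : ℝ) ^ (N : ℤ) ≤ (p : ℝ) ^ j := zpow_le_zpow_right₀ hp1.le hj
    have h2 : (p : ℝ) ^ (N : ℤ) = (p : ℝ) ^ N := zpow_natCast _ _
    have hmle : m ≤ (p : ℝ) ^ j :=
      le_trans (le_trans (le_max_left _ _) hN.le) (h2 ▸ h1)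
    have hinv : m⁻¹ ≤ (p : ℝ) ^ j :=
      le_trans (le_trans (le_max_right _ _) hN.le) (h2 ▸ h1)
    refine ⟨hmle, ?_⟩
    calc (1 : ℝ) = m⁻¹ * m := (inv_mul_cancel₀ hm0.ne').symm
      _ ≤ (p : ℝ) ^ j * m := mul_le_mul_of_nonneg_right hinv hm0.le
  have part1 : ∀ j : ℤ, (N : ℤ) ≤ j →
      μp {σ : ℚ_[p] | matSupNorm (uMatP p σ * G) ≤ (p : ℝ) ^ j}
        = ENNReal.ofReal ((p : ℝ) ^ j / m) := by
    intro j hj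
    obtain ⟨hmle, hj1⟩ := hmono j hj
    have hjpos : (0 : ℝ) < (p : ℝ) ^ j := zpow_pos hppos _
    rcases le_total ‖b‖ ‖d‖ with hbd | hdb
    · have hmd : m = ‖d‖ := max_eq_right hbd
      have hseteq : {σ : ℚ_[p] | matSupNorm (uMatP p σ * G) ≤ (p : ℝ) ^ j}
          = {σ : ℚ_[p] | ‖G 0 0 + σ * b‖ ≤ (p : ℝ) ^ j ∧ ‖G 0 1 + σ * d‖ ≤ (p : ℝ) ^ j ∧
              ‖b‖ ≤ (p : ℝ) ^ j ∧ ‖d‖ ≤ (p : ℝ) ^ j} := by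
        ext σ; exact hchar j σ hjpos
      rw [hseteq, mainCase p μp hμp (G 0 0) b (G 0 1) d hdet1 hbd j
        (hmd ▸ hmle) (hmd ▸ hj1), hmd]
    · have hmb : m = ‖b‖ := max_eq_left hdb
      have hseteq : {σ : ℚ_[p] | matSupNorm (uMatP p σ * G) ≤ (p : ℝ) ^ j}
          = {σ : ℚ_[p] | ‖G 0 1 + σ * d‖ ≤ (p : ℝ) ^ j ∧ ‖G 0 0 + σ * b‖ ≤ (p : ℝ) ^ j ∧
              ‖d‖ ≤ (p : ℝ) ^ j ∧ ‖b‖ ≤ (p : ℝ) ^ j} := by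
        ext σ
        rw [Set.mem_setOf_eq, Set.mem_setOf_eq, hchar j σ hjpos]
        tauto
      rw [hseteq, mainCase p μp hμp (G 0 1) d (G 0 0) b hdet2 hdb j
        (hmb ▸ hmle) (hmb ▸ hj1), hmb]
  refine ⟨⟨(N : ℤ), part1⟩, ⟨max (N : ℤ) 0, ?_⟩⟩
  intro j hj
  have hjN : (N : ℤ) ≤ j := le_trans (le_max_left _ _) hj
  have hj0 : (0 : ℤ) ≤ j := le_trans (le_max_right _ _) hj
  have hjpos : (0 : ℝ) < (p : ℝ) ^ j := zpow_pos hppos _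
  have h1j : (1 : ℝ) ≤ (p : ℝ) ^ j := by
    simpa using zpow_le_zpow_right₀ hp1.le hj0
  rw [part1 j hjN]
  have hden : {σ : ℚ_[p] | matSupNorm (uMatP p σ) ≤ (p : ℝ) ^ j}
      = {σ : ℚ_[p] | ‖σ‖ ≤ (p : ℝ) ^ j} := by
    ext σ
    rw [Set.mem_setOf_eq, Set.mem_setOf_eq, matSupNormLeIff p hjpos.le]
    constructor
    · intro h
      simpa [uMatP] using h 0 1
    · intro h i k
      fin_cases i <;> fin_cases k <;> simp [uMatP] <;> first | exact h1j | exact h | linarith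
  rw [hden, haarBall p μp hμp j]
  rw [ENNReal.toReal_ofReal (by positivity)]
  have htr : ((p : ℝ≥0∞) ^ j).toReal = (p : ℝ) ^ j := by
    rw [← ENNReal.ofReal_natCast, ← myOfRealZpow hppos, ENNReal.toReal_ofReal (by positivity)]
  rw [htr, div_right_comm, div_self hjpos.ne']
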